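/- arXiv:0804.0867 — 2 statements merged into one kernel-verified Lean document; each statement's English description precedes it below -/
import Mathlib

section
/- A Poisson random variable with mean -N·log(1-π) stochastically dominates a Binomial random variable with parameters N and π, for any integer N ≥ 1 and 0 ≤ π < 1. -/
open Finset

/-- Poisson pmf term. -/
noncomputable def pterm (a : ℝ) (k : ℕ) : ℝ := Real.exp (-a) * a ^ k / k.factorial

/-- Poisson cdf (strictly below `t`). -/
noncomputable def pcdf (a : ℝ) (t : ℕ) : ℝ := ∑ i ∈ range t, pterm a i

/-- Binomial cdf (strictly below `t`). -/
noncomputable def bcdf (p : ℝ) (N t : ℕ) : ℝ :=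
  ∑ i ∈ range t, (N.choose i : ℝ) * p ^ i * (1 - p) ^ (N - i)

lemma pterm_nonneg {a : ℝ} (ha : 0 ≤ a) (k : ℕ) : 0 ≤ pterm a k := by
  unfold pterm; positivity

lemma summable_pterm (a : ℝ) : Summable (pterm a) := by
  have h := (Real.summable_pow_div_factorial a).mul_left (Real.exp (-a))
  refine h.congr fun k => ?_
  rw [pterm.eq_1, mul_div_assoc]

lemma tsum_pterm (a : ℝ) : ∑' k, pterm a k = 1 := by
  have h : ∑' k : ℕ, a ^ k / (k.factorial : ℝ) = Real.exp a := by
    rw [Real.exp_eq_exp_ℝ, NormedSpace.exp_eq_tsum_div]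
  calc ∑' k, pterm a k = ∑' k : ℕ, Real.exp (-a) * (a ^ k / k.factorial) := by
        refine tsum_congr fun k => ?_
        rw [pterm.eq_1, mul_div_assoc]
    _ = Real.exp (-a) * Real.exp a := by rw [tsum_mul_left, h]
    _ = 1 := by rw [← Real.exp_add]; simp

lemma pcdf_le_one {a : ℝ} (ha : 0 ≤ a) (t : ℕ) : pcdf a t ≤ 1 := by
  rw [← tsum_pterm a]
  exact (summable_pterm a).sum_le_tsum _ (fun i _ => pterm_nonneg ha i)

lemma pcdf_nonneg {a : ℝ} (ha : 0 ≤ a) (t : ℕ) : 0 ≤ pcdf a t :=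
  Finset.sum_nonneg fun i _ => pterm_nonneg ha i

lemma pterm_add (a b : ℝ) (n : ℕ) :
    pterm (a + b) n = ∑ k ∈ range (n + 1), pterm a k * pterm b (n - k) := by
  unfold pterm
  rw [add_pow, Finset.mul_sum, Finset.sum_div]
  refine Finset.sum_congr rfl fun k hk => ?_
  have hkn : k ≤ n := Nat.lt_succ_iff.mp (Finset.mem_range.mp hk)
  have hc : (n.choose k : ℝ) = n.factorial / (k.factorial * (n - k).factorial) :=
    Nat.cast_choose ℝ hkn
  have h1 : (k.factorial : ℝ) ≠ 0 := Nat.cast_ne_zero.mpr k.factorial_ne_zero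
  have h2 : ((n - k).factorial : ℝ) ≠ 0 := Nat.cast_ne_zero.mpr (n - k).factorial_ne_zero
  have h3 : (n.factorial : ℝ) ≠ 0 := Nat.cast_ne_zero.mpr n.factorial_ne_zero
  rw [neg_add, Real.exp_add, hc]
  field_simp

lemma pconv (a b : ℝ) (t : ℕ) :
    pcdf (a + b) t = ∑ k ∈ range t, pterm a k * pcdf b (t - k) := by
  induction t with
  | zero => simp [pcdf]
  | succ s ih =>
    have hL : pcdf (a + b) (s + 1) = pcdf (a + b) s + pterm (a + b) s :=
      Finset.sum_range_succ _ s
    have hR : ∀ (c : ℝ) (n : ℕ), pcdf c (n + 1) = pcdf c n + pterm c n :=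
      fun c n => Finset.sum_range_succ _ n
    rw [hL, ih, pterm_add]
    rw [Finset.sum_range_succ (fun k => pterm a k * pcdf b (s + 1 - k)) s]
    rw [Finset.sum_range_succ (fun k => pterm a k * pterm b (s - k)) s]
    have e1 : s + 1 - s = 1 := by omega
    rw [e1, Nat.sub_self]
    have e3 : pcdf b 1 = pterm b 0 := Finset.sum_range_one (pterm b)
    rw [e3]
    have hstep : ∀ k ∈ range s,
        pterm a k * pcdf b (s + 1 - k)
          = pterm a k * pcdf b (s - k) + pterm a k * pterm b (s - k) := by
      intro k hk
      have hks : k < s := Finset.mem_range.mp hk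
      have h4 : s + 1 - k = (s - k) + 1 := by omega
      rw [h4, hR, mul_add]
    rw [Finset.sum_congr rfl hstep, Finset.sum_add_distrib]
    ring

lemma bPascal (p : ℝ) (N t : ℕ) :
    bcdf p (N + 1) t = (1 - p) * bcdf p N t + p * bcdf p N (t - 1) := by
  cases t with
  | zero => simp [bcdf]
  | succ s =>
    unfold bcdf
    rw [Finset.sum_range_succ' (fun i => ((N + 1).choose i : ℝ) * p ^ i * (1 - p) ^ (N + 1 - i)) s]
    rw [Finset.sum_range_succ' (fun i => ((N).choose i : ℝ) * p ^ i * (1 - p) ^ (N - i)) s]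
    simp only [Nat.choose_succ_succ, Nat.cast_add, Nat.succ_sub_succ, Nat.sub_zero,
      Nat.choose_zero_right, Nat.cast_one, pow_zero, one_mul, mul_one]
    have key : ∀ i ∈ range s,
        ((N.choose i : ℝ) + (N.choose (i + 1) : ℝ)) * p ^ (i + 1) * (1 - p) ^ (N - i)
          = (1 - p) * ((N.choose (i + 1) : ℝ) * p ^ (i + 1) * (1 - p) ^ (N - (i + 1)))
            + p * ((N.choose i : ℝ) * p ^ i * (1 - p) ^ (N - i)) := by
      intro i _
      by_cases h : i + 1 ≤ N
      · have hNi : N - i = (N - (i + 1)) + 1 := by omega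
        rw [hNi, pow_succ]
        ring
      · have h2 : N.choose (i + 1) = 0 := Nat.choose_eq_zero_of_lt (by omega)
        rw [h2]
        push_cast
        ring
    rw [Finset.sum_congr rfl key, Finset.sum_add_distrib, mul_add, Finset.mul_sum, Finset.mul_sum]
    ring

lemma bcdf_nonneg {p : ℝ} (h0 : 0 ≤ p) (h1 : p ≤ 1) (N t : ℕ) : 0 ≤ bcdf p N t := by
  refine Finset.sum_nonneg fun i _ => ?_
  have h2 : (0:ℝ) ≤ 1 - p := by linarith
  have := Nat.cast_nonneg (α := ℝ) (N.choose i)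
  positivity

lemma bcdf_mono {p : ℝ} (h0 : 0 ≤ p) (h1 : p ≤ 1) (N : ℕ) {t s : ℕ} (h : t ≤ s) :
    bcdf p N t ≤ bcdf p N s := by
  refine Finset.sum_le_sum_of_subset_of_nonneg (Finset.range_subset_range.mpr h) fun i _ _ => ?_
  have h2 : (0:ℝ) ≤ 1 - p := by linarith
  positivity

lemma key_cdf {π : ℝ} (h0 : 0 ≤ π) (h1 : π < 1) (N t : ℕ) :
    pcdf ((N : ℝ) * (-Real.log (1 - π))) t ≤ bcdf π N t := by
  have h1p : (0:ℝ) < 1 - π := by linarith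
  set μ : ℝ := -Real.log (1 - π) with hμdef
  have hμ : 0 ≤ μ := by
    have hl := Real.log_nonpos (x := 1 - π) (by linarith) (by linarith)
    rw [hμdef]; linarith
  have hexp : Real.exp (-μ) = 1 - π := by
    rw [hμdef, neg_neg, Real.exp_log h1p]
  induction N generalizing t with
  | zero =>
    apply le_of_eq
    simp only [Nat.cast_zero, zero_mul]
    unfold pcdf bcdf pterm
    refine Finset.sum_congr rfl fun i _ => ?_
    cases i with
    | zero => simp
    | succ j => simp [Nat.choose_eq_zero_of_lt (Nat.succ_pos j)]
  | succ n ih =>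
    have hcast : ((n + 1 : ℕ) : ℝ) * μ = μ + (n : ℝ) * μ := by push_cast; ring
    rw [hcast, pconv]
    cases t with
    | zero => simp [bcdf]
    | succ s =>
      have step1 : ∑ k ∈ range (s + 1), pterm μ k * pcdf ((n : ℝ) * μ) (s + 1 - k)
          ≤ ∑ k ∈ range (s + 1), pterm μ k * bcdf π n (s + 1 - k) := by
        refine Finset.sum_le_sum fun k _ => ?_
        exact mul_le_mul_of_nonneg_left (ih _) (pterm_nonneg hμ k)
      refine le_trans step1 ?_
      rw [Finset.sum_range_succ' (fun k => pterm μ k * bcdf π n (s + 1 - k)) s]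
      have step2 : ∑ i ∈ range s, pterm μ (i + 1) * bcdf π n (s + 1 - (i + 1))
          ≤ (∑ i ∈ range s, pterm μ (i + 1)) * bcdf π n s := by
        rw [Finset.sum_mul]
        refine Finset.sum_le_sum fun i _ => ?_
        refine mul_le_mul_of_nonneg_left ?_ (pterm_nonneg hμ (i + 1))
        exact bcdf_mono h0 (le_of_lt h1) n (by omega)
      have hsum : ∑ i ∈ range s, pterm μ (i + 1) ≤ π := by
        have h := pcdf_le_one hμ (s + 1)
        rw [pcdf.eq_1, Finset.sum_range_succ' (pterm μ) s] at h
        have h0' : pterm μ 0 = 1 - π := by simp [pterm, hexp]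
        rw [h0'] at h
        linarith
      have step3 : (∑ i ∈ range s, pterm μ (i + 1)) * bcdf π n s ≤ π * bcdf π n s :=
        mul_le_mul_of_nonneg_right hsum (bcdf_nonneg h0 (le_of_lt h1) n s)
      have h0' : pterm μ 0 = 1 - π := by simp [pterm, hexp]
      have hfinal : pterm μ 0 * bcdf π n (s + 1 - 0) + π * bcdf π n s
          = bcdf π (n + 1) (s + 1) := by
        rw [bPascal, h0']
        simp
      linarith

/-- A Poisson random variable with mean `-N·log(1-π)` stochastically dominates a
Binomial random variable with parameters `N` and `π`, for `N ≥ 1` and `0 ≤ π < 1`: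
for every `t`, the binomial upper tail is at most the Poisson upper tail. -/
theorem stmt_1 (N : ℕ) (hN : 1 ≤ N) (π : ℝ) (h0 : 0 ≤ π) (h1 : π < 1) (t : ℕ) :
    ∑ i ∈ Finset.Icc t N, (N.choose i : ℝ) * π ^ i * (1 - π) ^ (N - i) ≤
      ∑' i : ℕ, if t ≤ i then
        Real.exp (-(-(N : ℝ) * Real.log (1 - π))) *
          (-(N : ℝ) * Real.log (1 - π)) ^ i / (Nat.factorial i) else 0 := by
  set lam : ℝ := -(N : ℝ) * Real.log (1 - π) with hlam
  have h1p : (0:ℝ) < 1 - π := by linarith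
  have hlamμ : lam = (N : ℝ) * (-Real.log (1 - π)) := by rw [hlam]; ring
  have hlam0 : 0 ≤ lam := by
    have hl := Real.log_nonpos (x := 1 - π) (by linarith) (by linarith)
    rw [hlamμ]
    exact mul_nonneg (Nat.cast_nonneg N) (by linarith)
  -- rewrite the tsum as 1 - pcdf lam t
  have htsum : (∑' i : ℕ, if t ≤ i then
        Real.exp (-lam) * lam ^ i / (Nat.factorial i) else 0) = 1 - pcdf lam t := by
    have hind : ∀ i : ℕ, (if t ≤ i then Real.exp (-lam) * lam ^ i / (Nat.factorial i) else 0)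
        = Set.indicator {x : ℕ | x ∉ Finset.range t} (pterm lam) i := by
      intro i
      rw [Set.indicator_apply]
      by_cases h : t ≤ i
      · rw [if_pos h, if_pos (by simp [Finset.mem_range]; omega)]
        rfl
      · rw [if_neg h, if_neg (by simp [Finset.mem_range]; omega)]
    have h3 : (∑' i : ℕ, if t ≤ i then Real.exp (-lam) * lam ^ i / (Nat.factorial i) else 0)
        = ∑' (x : {x : ℕ // x ∉ Finset.range t}), pterm lam ↑x := by
      rw [tsum_congr hind]
      exact (tsum_subtype {x : ℕ | x ∉ Finset.range t} (pterm lam)).symm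
    rw [h3]
    have hc := Summable.sum_add_tsum_subtype_compl (summable_pterm lam) (Finset.range t)
    rw [tsum_pterm] at hc
    have hp : pcdf lam t = ∑ i ∈ Finset.range t, pterm lam i := rfl
    rw [hp]
    linarith
  rw [htsum]
  by_cases hT : t ≤ N + 1
  · have hsplit := Finset.sum_Ico_consecutive
      (fun i => ((N.choose i : ℝ) * π ^ i * (1 - π) ^ (N - i))) (Nat.zero_le t) hT
    simp only [Nat.Ico_zero_eq_range] at hsplit
    have hone : ∑ i ∈ range (N + 1), ((N.choose i : ℝ) * π ^ i * (1 - π) ^ (N - i)) = 1 := by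
      have hb := add_pow π (1 - π) N
      have h2 : (π + (1 - π)) = (1:ℝ) := by ring
      rw [h2, one_pow] at hb
      have hr : ∑ i ∈ range (N + 1), ((N.choose i : ℝ) * π ^ i * (1 - π) ^ (N - i))
          = ∑ k ∈ range (N + 1), π ^ k * (1 - π) ^ (N - k) * (N.choose k : ℝ) :=
        Finset.sum_congr rfl fun i _ => by ring
      rw [hr]
      exact hb.symm
    have hIcc : Finset.Icc t N = Finset.Ico t (N + 1) := (Finset.Ico_add_one_right_eq_Icc t N).symm
    rw [hIcc]
    have hkey := key_cdf h0 h1 N t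
    rw [← hlamμ] at hkey
    have hb : bcdf π N t = ∑ i ∈ range t, ((N.choose i : ℝ) * π ^ i * (1 - π) ^ (N - i)) := rfl
    linarith
  · have hempty : Finset.Icc t N = ∅ := Finset.Icc_eq_empty (by omega)
    rw [hempty, Finset.sum_empty]
    have hle := pcdf_le_one hlam0 t
    linarith
end

section
/- Harris's lemma: in a finite product probability space {0,1}^E with each coordinate independently 1 with some probability, if A is an increasing event and D is a decreasing event, then P(A ∩ D) ≤ P(A)·P(D). -/
open MeasureTheory

/-- The product Bernoulli measure on `{0,1}^E`: each coordinate is independently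
`true` with probability `p e`. -/
noncomputable def bernoulliProduct {E : Type*} [Fintype E] (p : E → ENNReal)
    (hp : ∀ e, p e ≤ 1) : Measure (E → Bool) :=
  Measure.pi fun e => (PMF.bernoulli (p e).toNNReal
    (by simpa using ENNReal.toNNReal_mono ENNReal.one_ne_top (hp e))).toMeasure

section Aux

variable {E : Type*} [Fintype E] [DecidableEq E] (p : E → ENNReal) (hp : ∀ e, p e ≤ 1)

noncomputable def hWeight (e : E) (b : Bool) : NNReal :=
  if b then (p e).toNNReal else 1 - (p e).toNNReal

noncomputable def hWt (ω : E → Bool) : NNReal := ∏ e, hWeight p e (ω e)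

lemma hWeight_sum (hp : ∀ e, p e ≤ 1) (e : E) :
    hWeight p e true + hWeight p e false = 1 := by
  have h1 : (p e).toNNReal ≤ 1 := by
    rw [← ENNReal.toNNReal_one]
    exact ENNReal.toNNReal_mono ENNReal.one_ne_top (hp e)
  simp [hWeight, add_tsub_cancel_of_le h1]

lemma singleton_meas (ω : E → Bool) :
    bernoulliProduct p hp {ω} = (hWt p ω : ENNReal) := by
  have h : ({ω} : Set (E → Bool)) = Set.pi Set.univ (fun e => {ω e}) := by
    ext σ; simp [funext_iff, Set.mem_pi]
  rw [bernoulliProduct, h, Measure.pi_pi]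
  rw [hWt, ENNReal.coe_finset_prod]
  refine Finset.prod_congr rfl fun e _ => ?_
  rw [PMF.toMeasure_apply_singleton _ _ (measurableSet_singleton _)]
  have hne : p e ≠ ⊤ := (lt_of_le_of_lt (hp e) ENNReal.one_lt_top).ne
  cases hb : ω e <;> simp [PMF.bernoulli_apply, hWeight]
  · exact PMF.bernoulli_apply ..
  · exact PMF.bernoulli_apply ..

lemma set_meas (S : Set (E → Bool)) [DecidablePred (· ∈ S)] :
    bernoulliProduct p hp S
      = ((∑ ω ∈ Finset.univ.filter (· ∈ S), hWt p ω : NNReal) : ENNReal) := by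
  have h : S = ⋃ ω ∈ Finset.univ.filter (· ∈ S), ({ω} : Set (E → Bool)) := by
    ext σ; simp
  calc bernoulliProduct p hp S
      = bernoulliProduct p hp (⋃ ω ∈ Finset.univ.filter (· ∈ S), ({ω} : Set (E → Bool))) := by
        rw [← h]
    _ = _ := by
        rw [measure_biUnion_finset]
        · push_cast
          exact Finset.sum_congr rfl fun ω _ => singleton_meas p hp ω
        · intro a _ b _ hab
          simp [Set.disjoint_singleton, hab]
        · intro ω _; exact measurableSet_singleton ω

lemma hWt_total (hp : ∀ e, p e ≤ 1) : ∑ ω : E → Bool, hWt p ω = 1 := by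
  unfold hWt
  rw [← Fintype.piFinset_univ, ← Finset.prod_univ_sum]
  refine Finset.prod_eq_one fun e _ => ?_
  rw [show (Finset.univ : Finset Bool) = {true, false} by rfl]
  simpa using hWeight_sum p hp e

lemma hWt_logmod (a b : E → Bool) :
    hWt p a * hWt p b = hWt p (a ⊓ b) * hWt p (a ⊔ b) := by
  unfold hWt
  rw [← Finset.prod_mul_distrib, ← Finset.prod_mul_distrib]
  refine Finset.prod_congr rfl fun e _ => ?_
  have : (a ⊓ b) e = a e ⊓ b e := rfl
  have : (a ⊔ b) e = a e ⊔ b e := rfl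
  cases ha : a e <;> cases hb : b e <;>
    simp [Pi.inf_apply, Pi.sup_apply, ha, hb, mul_comm]

end Aux

/-- Harris's lemma: in the finite product probability space `{0,1}^E` with each
coordinate independently `1` with some probability, if `A` is an increasing event
and `D` is a decreasing event, then `P(A ∩ D) ≤ P(A)·P(D)`. -/
theorem stmt_13 {E : Type*} [Fintype E] (p : E → ENNReal) (hp : ∀ e, p e ≤ 1)
    (A D : Set (E → Bool)) (hAmeas : MeasurableSet A) (hDmeas : MeasurableSet D)
    (hA : ∀ ω ω' : E → Bool, ω ≤ ω' → ω ∈ A → ω' ∈ A)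
    (hD : ∀ ω ω' : E → Bool, ω ≤ ω' → ω' ∈ D → ω ∈ D) :
    bernoulliProduct p hp (A ∩ D) ≤ bernoulliProduct p hp A * bernoulliProduct p hp D := by
  classical
  set μ : (E → Bool) → NNReal := hWt p with hμdef
  set f : (E → Bool) → NNReal := fun ω => if ω ∈ A then 1 else 0 with hfdef
  set g : (E → Bool) → NNReal := fun ω => if ω ∈ D then 0 else 1 with hgdef
  have hf : Monotone f := by
    intro ω ω' hle
    by_cases h : ω ∈ A
    · simp [hfdef, h, hA ω ω' hle h]
    · simp [hfdef, h]
  have hg : Monotone g := by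
    intro ω ω' hle
    by_cases h : ω' ∈ D
    · have h' := hD ω ω' hle h
      simp [hgdef, h, h']
    · simp only [hgdef]
      split_ifs <;> simp
  have hfkg := fkg (μ := μ) (f := f) (g := g)
    (fun a => zero_le) (fun a => zero_le) (fun a => zero_le) hf hg
    (fun a b => le_of_eq (hWt_logmod p a b))
  -- sums as filtered sums
  have hSf : ∑ a, μ a * f a = ∑ ω ∈ Finset.univ.filter (· ∈ A), μ ω := by
    rw [Finset.sum_filter]; exact Finset.sum_congr rfl fun ω _ => by
      by_cases h : ω ∈ A <;> simp [hfdef, h]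
  have hSg : ∑ a, μ a * g a = ∑ ω ∈ Finset.univ.filter (· ∈ Dᶜ), μ ω := by
    rw [Finset.sum_filter]; exact Finset.sum_congr rfl fun ω _ => by
      by_cases h : ω ∈ D <;> simp [hgdef, h]
  have hSfg : ∑ a, μ a * (f a * g a) = ∑ ω ∈ Finset.univ.filter (· ∈ A ∩ Dᶜ), μ ω := by
    rw [Finset.sum_filter]; exact Finset.sum_congr rfl fun ω _ => by
      by_cases h : ω ∈ A <;> by_cases h' : ω ∈ D <;> simp [hfdef, hgdef, h, h']
  have htot : (∑ a, μ a) = 1 := hWt_total p hp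
  set sA := ∑ ω ∈ Finset.univ.filter (· ∈ A), μ ω
  set sD := ∑ ω ∈ Finset.univ.filter (· ∈ D), μ ω
  set sDc := ∑ ω ∈ Finset.univ.filter (· ∈ Dᶜ), μ ω
  set sAD := ∑ ω ∈ Finset.univ.filter (· ∈ A ∩ D), μ ω
  set sADc := ∑ ω ∈ Finset.univ.filter (· ∈ A ∩ Dᶜ), μ ω
  rw [hSf, hSg, hSfg, htot, one_mul] at hfkg
  -- splitting identities
  have hsplitA : sAD + sADc = sA := by
    rw [show sA = ∑ ω ∈ Finset.univ.filter (· ∈ A), μ ω from rfl,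
      ← Finset.sum_filter_add_sum_filter_not (Finset.univ.filter (· ∈ A)) (· ∈ D)]
    congr 1
    · apply Finset.sum_congr _ (fun _ _ => rfl)
      ext ω; simp [Set.mem_inter_iff, and_comm]
    · apply Finset.sum_congr _ (fun _ _ => rfl)
      ext ω; simp [Set.mem_inter_iff, and_comm]
  have hsplitD : sD + sDc = 1 := by
    rw [← htot, ← Finset.sum_filter_add_sum_filter_not Finset.univ (· ∈ D)]
    congr 1
  -- key NNReal inequality
  have hkey : sAD ≤ sA * sD := by
    have h2 : sA = sA * sD + sA * sDc := by
      rw [← mul_add, hsplitD, mul_one]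
    have h1 : sAD + sA * sDc ≤ sA * sD + sA * sDc := by
      calc sAD + sA * sDc ≤ sAD + sADc := add_le_add_right hfkg _
        _ = sA := hsplitA
        _ = sA * sD + sA * sDc := h2
    exact le_of_add_le_add_right h1
  -- transfer to ENNReal
  have hm1 : bernoulliProduct p hp (A ∩ D) = (sAD : ENNReal) := set_meas p hp (A ∩ D)
  have hm2 : bernoulliProduct p hp A = (sA : ENNReal) := set_meas p hp A
  have hm3 : bernoulliProduct p hp D = (sD : ENNReal) := set_meas p hp D
  rw [hm1, hm2, hm3, ← ENNReal.coe_mul]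
  exact_mod_cast hkey
end
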